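/- Let n ≥ 2 and 1 < k ≤ n, and let r > 0. The maximum of f(x,y,z) = (k-1)·x^{2k}·y^r + (n-k)·x^{2k-2}·y^r·z² over x, y, z ≥ 0 subject to (k-1)·x² + y² + (n-k)·z² = 1 equals (2k)^k / (k-1)^{k-1} · (r/(2k+r))^{r/2} · 1/(2k+r)^k. -/

import Mathlib

open Real

lemma amgm (k : ℕ) (hk : 1 ≤ k) (r : ℝ) (hr : 0 < r) (t : ℝ) (ht0 : 0 ≤ t) (ht1 : t ≤ 1) :
    (1 - t) ^ k * t ^ (r / 2) ≤ (2 * k / (2 * k + r)) ^ k * (r / (2 * k + r)) ^ (r / 2) := by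
  have hk0 : (0:ℝ) < k := by exact_mod_cast Nat.pos_of_ne_zero (by omega)
  have hden : (0:ℝ) < 2 * k + r := by positivity
  have hRHS : (0:ℝ) ≤ (2 * k / (2 * k + r)) ^ k * (r / (2 * k + r)) ^ (r / 2) := by positivity
  rcases eq_or_lt_of_le ht0 with h0 | h0
  · rw [← h0, Real.zero_rpow (by positivity : r/2 ≠ 0), mul_zero]; exact hRHS
  set N : ℝ := k + r / 2 with hN
  have hN0 : 0 < N := by positivity
  set w₁ : ℝ := k / N with hw1
  set w₂ : ℝ := (r / 2) / N with hw2
  have hw10 : 0 < w₁ := by positivity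
  have hw20 : 0 < w₂ := by positivity
  have hsum : w₁ + w₂ = 1 := by rw [hw1, hw2]; field_simp; rw [hN]; ring
  set p₁ : ℝ := (1 - t) / w₁ with hp1
  set p₂ : ℝ := t / w₂ with hp2
  have hp10 : 0 ≤ p₁ := div_nonneg (by linarith) hw10.le
  have hp20 : 0 ≤ p₂ := div_nonneg ht0 hw20.le
  have key : p₁ ^ w₁ * p₂ ^ w₂ ≤ 1 := by
    have h := Real.geom_mean_le_arith_mean2_weighted hw10.le hw20.le hp10 hp20 hsum
    have e1 : w₁ * p₁ = 1 - t := by rw [hp1]; field_simp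
    have e2 : w₂ * p₂ = t := by rw [hp2]; field_simp
    rw [e1, e2] at h; linarith
  have key2 : (p₁ ^ w₁ * p₂ ^ w₂) ^ N ≤ 1 := by
    have := Real.rpow_le_one (by positivity) key hN0.le
    simpa using this
  have e1t : 1 - t = w₁ * p₁ := by rw [hp1]; field_simp
  have e2t : t = w₂ * p₂ := by rw [hp2]; field_simp
  have hw1N : w₁ * N = k := by rw [hw1]; field_simp
  have hw2N : w₂ * N = r / 2 := by rw [hw2]; field_simp
  have a1 : p₁ ^ k = (p₁ ^ w₁) ^ N := by
    rw [← Real.rpow_natCast p₁ k, ← hw1N, Real.rpow_mul hp10]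
  have a2 : p₂ ^ (r/2) = (p₂ ^ w₂) ^ N := by
    rw [← hw2N, Real.rpow_mul hp20]
  have hsplit : (1 - t) ^ k * t ^ (r / 2)
      = w₁ ^ k * w₂ ^ (r/2) * ((p₁ ^ w₁ * p₂ ^ w₂) ^ N) := by
    rw [e1t, e2t, mul_pow, Real.mul_rpow hw20.le hp20, a1, a2,
      Real.mul_rpow (Real.rpow_nonneg hp10 _) (Real.rpow_nonneg hp20 _)]
    ring
  have hb : (1 - t) ^ k * t ^ (r / 2) ≤ w₁ ^ k * w₂ ^ (r/2) := by
    rw [hsplit]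
    calc w₁ ^ k * w₂ ^ (r/2) * ((p₁ ^ w₁ * p₂ ^ w₂) ^ N)
        ≤ w₁ ^ k * w₂ ^ (r/2) * 1 :=
          mul_le_mul_of_nonneg_left key2 (by positivity)
      _ = w₁ ^ k * w₂ ^ (r/2) := by ring
  have ew1 : w₁ = 2 * k / (2 * k + r) := by
    rw [hw1, hN, div_eq_div_iff (by positivity) (by positivity)]; ring
  have ew2 : w₂ = r / (2 * k + r) := by
    rw [hw2, hN, div_eq_div_iff (by positivity) (by positivity)]; ring
  rw [ew1, ew2] at hb
  exact hb

theorem stmt_2 (n k : ℕ) (hn : 2 ≤ n) (hk1 : 1 < k) (hkn : k ≤ n) (r : ℝ) (hr : 0 < r) :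
    IsGreatest {v : ℝ | ∃ x y z : ℝ, 0 ≤ x ∧ 0 ≤ y ∧ 0 ≤ z ∧
        ((k : ℝ) - 1) * x ^ 2 + y ^ 2 + ((n : ℝ) - k) * z ^ 2 = 1 ∧
        v = ((k : ℝ) - 1) * x ^ (2 * k) * y ^ r + ((n : ℝ) - k) * x ^ (2 * k - 2) * y ^ r * z ^ 2}
      ((2 * (k : ℝ)) ^ k / ((k : ℝ) - 1) ^ (k - 1) * (r / (2 * k + r)) ^ (r / 2) *
        (1 / (2 * (k : ℝ) + r) ^ k)) := by
  have hK1 : (1:ℝ) < (k:ℝ) := by exact_mod_cast hk1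
  have hK0 : (0:ℝ) < (k:ℝ) - 1 := by linarith
  have hden : (0:ℝ) < 2 * (k:ℝ) + r := by positivity
  have hnk : (0:ℝ) ≤ (n:ℝ) - (k:ℝ) := by
    have : (k:ℝ) ≤ (n:ℝ) := by exact_mod_cast hkn
    linarith
  have hkk : k - 1 + 1 = k := by omega
  have hpowk : ((k:ℝ) - 1) ^ k = ((k:ℝ) - 1) ^ (k-1) * ((k:ℝ) - 1) := by
    rw [← pow_succ, hkk]
  constructor
  · -- membership
    refine ⟨Real.sqrt (2 * (k:ℝ) / ((2 * (k:ℝ) + r) * ((k:ℝ) - 1))),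
      Real.sqrt (r / (2 * (k:ℝ) + r)), 0, Real.sqrt_nonneg _, Real.sqrt_nonneg _, le_refl 0,
      ?_, ?_⟩
    · rw [Real.sq_sqrt (by positivity), Real.sq_sqrt (by positivity)]
      field_simp
      ring
    · have hx2 : Real.sqrt (2 * (k:ℝ) / ((2 * (k:ℝ) + r) * ((k:ℝ) - 1))) ^ (2*k)
          = (2 * (k:ℝ) / ((2 * (k:ℝ) + r) * ((k:ℝ) - 1))) ^ k := by
        rw [pow_mul, Real.sq_sqrt (by positivity)]
      have hy : Real.sqrt (r / (2 * (k:ℝ) + r)) ^ r = (r / (2 * (k:ℝ) + r)) ^ (r/2) := by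
        rw [Real.sqrt_eq_rpow,
          ← Real.rpow_mul (by positivity : (0:ℝ) ≤ r / (2 * (k:ℝ) + r))]
        congr 1
        ring
      rw [hx2, hy]
      have hval : ((k:ℝ)-1) * (2*(k:ℝ)/((2*(k:ℝ)+r)*((k:ℝ)-1)))^k
          = (2*(k:ℝ))^k / ((k:ℝ)-1)^(k-1) * (1/(2*(k:ℝ)+r)^k) := by
        rw [div_pow, mul_pow (2*(k:ℝ)+r) ((k:ℝ)-1) k, hpowk]
        field_simp
      rw [show ((0:ℝ):ℝ) ^ 2 = 0 by norm_num] 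
      rw [mul_zero, add_zero,
        show ∀ a b c : ℝ, a * b * c = (a * b) * c from fun _ _ _ => rfl, hval]
      ring
  · -- upper bound
    rintro v ⟨x, y, z, hx, hy, hz, hcon, hv⟩
    have hz2 : (0:ℝ) ≤ ((n:ℝ) - k) * z ^ 2 := mul_nonneg hnk (sq_nonneg z)
    have hx2 : (0:ℝ) ≤ ((k:ℝ) - 1) * x ^ 2 := mul_nonneg hK0.le (sq_nonneg x)
    have hy1 : y ^ 2 ≤ 1 := by nlinarith [sq_nonneg y]
    have h1y : (0:ℝ) ≤ 1 - y ^ 2 := by linarith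
    have hxb : x ^ 2 ≤ (1 - y ^ 2) / ((k:ℝ) - 1) := by
      rw [le_div_iff₀ hK0]; nlinarith
    have hpow : x ^ (2*k) = x ^ (2*k-2) * x ^ 2 := by
      rw [← pow_add]; congr 1; omega
    have hcc : ((k:ℝ) - 1) * x ^ 2 + ((n:ℝ) - k) * z ^ 2 = 1 - y ^ 2 := by linarith
    have hvv : v = x ^ (2*k-2) * y ^ r * (1 - y ^ 2) := by
      rw [hv, hpow]
      linear_combination x ^ (2*k-2) * y ^ r * hcc
    have hxp : x ^ (2*k-2) = (x ^ 2) ^ (k-1) := by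
      rw [← pow_mul]; congr 1; omega
    have hyr : (0:ℝ) ≤ y ^ r := Real.rpow_nonneg hy r
    have step1 : v ≤ ((1 - y^2) / ((k:ℝ)-1)) ^ (k-1) * y ^ r * (1 - y ^ 2) := by
      rw [hvv, hxp]
      have := pow_le_pow_left₀ (sq_nonneg x) hxb (k-1)
      exact mul_le_mul_of_nonneg_right (mul_le_mul_of_nonneg_right this hyr) h1y
    have ey : y ^ r = (y ^ 2) ^ (r/2) := by
      rw [← Real.rpow_natCast y 2, ← Real.rpow_mul hy]
      congr 1
      push_cast
      ring
    have key := amgm k (by omega) r hr (y^2) (sq_nonneg y) hy1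
    have step2 : ((1 - y^2) / ((k:ℝ)-1)) ^ (k-1) * y ^ r * (1 - y ^ 2)
        = (1 - y^2) ^ k * (y^2) ^ (r/2) / ((k:ℝ)-1) ^ (k-1) := by
      rw [ey, div_pow,
        show (1-y^2)^k = (1-y^2)^(k-1)*(1-y^2) by rw [← pow_succ, hkk]]
      ring
    have step3 : (1 - y^2) ^ k * (y^2) ^ (r/2) / ((k:ℝ)-1) ^ (k-1)
        ≤ (2 * (k:ℝ) / (2 * (k:ℝ) + r)) ^ k * (r / (2 * (k:ℝ) + r)) ^ (r / 2)
          / ((k:ℝ)-1) ^ (k-1) := by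
      gcongr
    calc v ≤ ((1 - y^2) / ((k:ℝ)-1)) ^ (k-1) * y ^ r * (1 - y ^ 2) := step1
      _ = (1 - y^2) ^ k * (y^2) ^ (r/2) / ((k:ℝ)-1) ^ (k-1) := step2
      _ ≤ (2 * (k:ℝ) / (2 * (k:ℝ) + r)) ^ k * (r / (2 * (k:ℝ) + r)) ^ (r / 2)
          / ((k:ℝ)-1) ^ (k-1) := step3
      _ = (2 * (k : ℝ)) ^ k / ((k : ℝ) - 1) ^ (k - 1) * (r / (2 * k + r)) ^ (r / 2) *
          (1 / (2 * (k : ℝ) + r) ^ k) := by rw [div_pow]; ring
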